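/- Let μ₁, ..., μₙ be probability measures on a finite set Ω and let E ⊆ Ω be an event with 0 < μ_i(E) < 1 for all i. Suppose the experts agree outside E: μ_i({ω}) = μ_j({ω}) for all ω ∉ E and all i, j. Then any subset P* of the convex hull of {μ₁,...,μₙ} is rectangular with respect to the partition {E, Eᶜ}: for all p¹, p², p³ ∈ P*, there exists p⁴ ∈ P* such that for every event F, p⁴(F) = p³(E)·p¹(F|E) + p³(Eᶜ)·p²(F|Eᶜ). -/
import Mathlib


def IsProb {Ω : Type*} [Fintype Ω] (p : Ω → ℝ) : Prop :=
  (∀ ω, 0 ≤ p ω) ∧ ∑ ω, p ω = 1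

def prMass {Ω : Type*} [Fintype Ω] (p : Ω → ℝ) (E : Finset Ω) : ℝ := ∑ ω ∈ E, p ω

theorem stmt_2 {Ω : Type*} [Fintype Ω] [DecidableEq Ω] (n : ℕ)
    (μ : Fin n → Ω → ℝ) (hμ : ∀ i, IsProb (μ i)) (E : Finset Ω)
    (hE : ∀ i, 0 < prMass (μ i) E ∧ prMass (μ i) E < 1)
    (hagree : ∀ ω ∉ E, ∀ i j, μ i ω = μ j ω)
    (P : Set (Ω → ℝ)) (hP : P ⊆ convexHull ℝ (Set.range μ)) :
    ∀ p1 ∈ P, ∀ p2 ∈ P, ∀ p3 ∈ P, ∃ p4 ∈ P, ∀ F : Finset Ω,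
      prMass p4 F = prMass p3 E * (prMass p1 (E ∩ F) / prMass p1 E)
        + prMass p3 Eᶜ * (prMass p2 (Eᶜ ∩ F) / prMass p2 Eᶜ) := by
  intro p1 hp1 p2 hp2 p3 hp3
  refine ⟨p1, hp1, ?_⟩
  have h1 := hP hp1
  have h2 := hP hp2
  have h3 := hP hp3
  -- range μ is nonempty, pick i0
  have hne : (Set.range μ).Nonempty := by
    by_contra h
    rw [Set.not_nonempty_iff_eq_empty] at h
    rw [h, convexHull_empty] at h1
    exact h1
  obtain ⟨q, i0, hq⟩ := hne
  -- the convex set of candidates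
  set S : Set (Ω → ℝ) := {p | (∀ ω ∉ E, p ω = μ i0 ω) ∧ ∑ ω, p ω = 1} with hS
  have hconv : Convex ℝ S := by
    intro x hx y hy a b ha hb hab
    constructor
    · intro ω hω
      have hx' := hx.1 ω hω
      have hy' := hy.1 ω hω
      simp only [Pi.add_apply, Pi.smul_apply, smul_eq_mul, hx', hy']
      ring_nf
      linear_combination (μ i0 ω) * hab
    · simp only [Pi.add_apply, Pi.smul_apply, smul_eq_mul, Finset.sum_add_distrib,
        ← Finset.mul_sum, hx.2, hy.2]
      linarith
  have hsub : convexHull ℝ (Set.range μ) ⊆ S := by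
    apply convexHull_min _ hconv
    rintro _ ⟨j, rfl⟩
    exact ⟨fun ω hω => hagree ω hω j i0, (hμ j).2⟩
  have hs1 : p1 ∈ S := hsub h1
  have hs2 : p2 ∈ S := hsub h2
  have hs3 : p3 ∈ S := hsub h3
  -- all elements of S have the same mass on Eᶜ and on E
  have hcmass : ∀ p ∈ S, prMass p Eᶜ = prMass (μ i0) Eᶜ := by
    intro p hp
    apply Finset.sum_congr rfl
    intro ω hω
    exact hp.1 ω (Finset.mem_compl.mp hω)
  have hEmass : ∀ p ∈ S, prMass p E = prMass (μ i0) E := by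
    intro p hp
    have h := Finset.sum_add_sum_compl E p
    have h' := Finset.sum_add_sum_compl E (μ i0)
    have := hcmass p hp
    unfold prMass at *
    rw [hp.2] at h
    rw [(hμ i0).2] at h'
    linarith
  have hcE : 0 < prMass (μ i0) E := (hE i0).1
  have hcEc : 0 < prMass (μ i0) Eᶜ := by
    have h' := Finset.sum_add_sum_compl E (μ i0)
    have := (hE i0).2
    unfold prMass at *
    rw [(hμ i0).2] at h'
    linarith
  intro F
  have key1 : prMass p1 E = prMass (μ i0) E := hEmass p1 hs1
  have key3 : prMass p3 E = prMass (μ i0) E := hEmass p3 hs3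
  have key2c : prMass p2 Eᶜ = prMass (μ i0) Eᶜ := hcmass p2 hs2
  have key3c : prMass p3 Eᶜ = prMass (μ i0) Eᶜ := hcmass p3 hs3
  -- p1 and p2 agree on Eᶜ ∩ F
  have hagreeF : prMass p2 (Eᶜ ∩ F) = prMass p1 (Eᶜ ∩ F) := by
    apply Finset.sum_congr rfl
    intro ω hω
    have hωc : ω ∉ E := Finset.mem_compl.mp (Finset.mem_of_mem_inter_left hω)
    rw [hs2.1 ω hωc, hs1.1 ω hωc]
  -- split prMass p1 F
  have hsplit : prMass p1 F = prMass p1 (E ∩ F) + prMass p1 (Eᶜ ∩ F) := by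
    unfold prMass
    rw [Finset.inter_comm E F, Finset.inter_comm Eᶜ F]
    have hd : F ∩ Eᶜ = F \ E := by ext ω; simp
    rw [hd]
    exact (Finset.sum_inter_add_sum_sdiff F E p1).symm
  rw [hsplit, key1, key3, key2c, key3c, hagreeF]
  field_simp
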